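/- arXiv:2509.05673 — 2 statements merged into one kernel-verified Lean document; each statement's English description precedes it below -/
import Mathlib

section
/- A ring R is weakly strongly 2-nil-clean if and only if 30 is nilpotent in R and for every a ∈ R at least one of a^3 - a, a(a-1)(a-2), a(a+1)(a+2) is nilpotent. -/
/-- A ring is weakly strongly 2-nil-clean if every element is `±e ± f + n` with
`e, f` idempotents and `n` nilpotent, all commuting with each other. -/
def IsWeaklyStrongly2NilClean (R : Type*) [Ring R] : Prop :=
  ∀ a : R, ∃ e f n : R, IsIdempotentElem e ∧ IsIdempotentElem f ∧ IsNilpotent n ∧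
    Commute e f ∧ Commute e n ∧ Commute f n ∧
    (a = e + f + n ∨ a = e - f + n ∨ a = -e + f + n ∨ a = -e - f + n)

/-- A ring is strongly 2-nil-clean if every element is `e + f + n` with
`e, f` idempotents and `n` nilpotent, all commuting with each other. -/
def IsStrongly2NilClean (R : Type*) [Ring R] : Prop :=
  ∀ a : R, ∃ e f n : R, IsIdempotentElem e ∧ IsIdempotentElem f ∧ IsNilpotent n ∧
    Commute e f ∧ Commute e n ∧ Commute f n ∧ a = e + f + n



section Helpers

variable {S : Type*} [CommRing S]

private lemma cnil_add {x y : S} (hx : IsNilpotent x) (hy : IsNilpotent y) :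
    IsNilpotent (x + y) := Commute.isNilpotent_add (Commute.all x y) hx hy

private lemma cnil_mul_left (c : S) {x : S} (hx : IsNilpotent x) : IsNilpotent (c * x) :=
  (Commute.all c x).isNilpotent_mul_left hx

private lemma cnil_mul_right (c : S) {x : S} (hx : IsNilpotent x) : IsNilpotent (x * c) :=
  (Commute.all x c).isNilpotent_mul_right hx

/-- Newton-iteration idempotent lifting, by induction on the 2-power nilpotency degree. -/
private lemma lift_idem_aux : ∀ (k : ℕ) (u : S), (u ^ 2 - u) ^ (2 ^ k) = 0 →
    ∃ e : S, IsIdempotentElem e ∧ IsNilpotent (u - e) := by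
  intro k
  induction k with
  | zero =>
    intro u h
    rw [pow_zero, pow_one, sub_eq_zero] at h
    exact ⟨u, by rwa [IsIdempotentElem, ← sq], by simp⟩
  | succ k ih =>
    intro u h
    have step : ((3 * u ^ 2 - 2 * u ^ 3) ^ 2 - (3 * u ^ 2 - 2 * u ^ 3)) ^ (2 ^ k) = 0 := by
      have e1 : ((3 * u ^ 2 - 2 * u ^ 3) ^ 2 - (3 * u ^ 2 - 2 * u ^ 3)) ^ (2 ^ k)
          = ((u ^ 2 - u) ^ 2) ^ (2 ^ k) * ((2 * u + 1) * (2 * u - 3)) ^ (2 ^ k) := by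
        rw [← mul_pow]
        congr 1
        ring
      rw [e1, ← pow_mul, ← pow_succ', h, zero_mul]
    obtain ⟨e, he, hne⟩ := ih (3 * u ^ 2 - 2 * u ^ 3) step
    refine ⟨e, he, ?_⟩
    have hd : IsNilpotent (u ^ 2 - u) := ⟨2 ^ (k + 1), h⟩
    have e2 : u - e = (2 * u - 1) * (u ^ 2 - u) + (3 * u ^ 2 - 2 * u ^ 3 - e) := by ring
    rw [e2]
    exact cnil_add (cnil_mul_left _ hd) hne

private lemma lift_idem {u : S} (h : IsNilpotent (u ^ 2 - u)) :
    ∃ e : S, IsIdempotentElem e ∧ IsNilpotent (u - e) := by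
  obtain ⟨m, hm⟩ := h
  exact lift_idem_aux m u (pow_eq_zero_of_le (Nat.lt_two_pow_self (n := m)).le hm)

/-- Case `e + f`: if `b(b-1)(b-2)` is nilpotent (and 30 is), then `b = e + f + n`. -/
private lemma caseA (h30 : IsNilpotent (30 : S)) {b : S}
    (hb : IsNilpotent (b * (b - 1) * (b - 2))) :
    ∃ e f n : S, IsIdempotentElem e ∧ IsIdempotentElem f ∧ IsNilpotent n ∧ b = e + f + n := by
  have hg : IsNilpotent (b ^ 3 - 3 * b ^ 2 + 2 * b) := by
    have : b ^ 3 - 3 * b ^ 2 + 2 * b = b * (b - 1) * (b - 2) := by ring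
    rwa [this]
  have hu : IsNilpotent ((7 * b ^ 2 + 24 * b) ^ 2 - (7 * b ^ 2 + 24 * b)) := by
    have : (7 * b ^ 2 + 24 * b) ^ 2 - (7 * b ^ 2 + 24 * b)
        = (49 * b + 483) * (b ^ 3 - 3 * b ^ 2 + 2 * b) + (64 * b ^ 2 - 33 * b) * 30 := by ring
    rw [this]
    exact cnil_add (cnil_mul_left _ hg) (cnil_mul_left _ h30)
  have hv : IsNilpotent ((8 * b ^ 2 + 22 * b) ^ 2 - (8 * b ^ 2 + 22 * b)) := by
    have : (8 * b ^ 2 + 22 * b) ^ 2 - (8 * b ^ 2 + 22 * b)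
        = (64 * b + 544) * (b ^ 3 - 3 * b ^ 2 + 2 * b) + (66 * b ^ 2 - 37 * b) * 30 := by ring
    rw [this]
    exact cnil_add (cnil_mul_left _ hg) (cnil_mul_left _ h30)
  have hw : IsNilpotent (b - (7 * b ^ 2 + 24 * b) - (8 * b ^ 2 + 22 * b)) := by
    apply IsNilpotent.of_pow (m := 2)
    have : (b - (7 * b ^ 2 + 24 * b) - (8 * b ^ 2 + 22 * b)) ^ 2
        = (225 * b + 2025) * (b ^ 3 - 3 * b ^ 2 + 2 * b) + (255 * b ^ 2 - 135 * b) * 30 := by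
      ring
    rw [this]
    exact cnil_add (cnil_mul_left _ hg) (cnil_mul_left _ h30)
  obtain ⟨e, he, hue⟩ := lift_idem hu
  obtain ⟨f, hf, hvf⟩ := lift_idem hv
  refine ⟨e, f, b - e - f, he, hf, ?_, by ring⟩
  have : b - e - f = (b - (7 * b ^ 2 + 24 * b) - (8 * b ^ 2 + 22 * b))
      + ((7 * b ^ 2 + 24 * b) - e) + ((8 * b ^ 2 + 22 * b) - f) := by ring
  rw [this]
  exact cnil_add (cnil_add hw hue) hvf

/-- Case `e - f`: if `b^3 - b` is nilpotent (and 30 is), then `b = e - f + n`. -/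
private lemma caseB (h30 : IsNilpotent (30 : S)) {b : S}
    (hb : IsNilpotent (b ^ 3 - b)) :
    ∃ e f n : S, IsIdempotentElem e ∧ IsIdempotentElem f ∧ IsNilpotent n ∧ b = e - f + n := by
  have hu : IsNilpotent ((23 * b ^ 2 + 8 * b) ^ 2 - (23 * b ^ 2 + 8 * b)) := by
    have : (23 * b ^ 2 + 8 * b) ^ 2 - (23 * b ^ 2 + 8 * b)
        = (529 * b + 368) * (b ^ 3 - b) + (19 * b ^ 2 + 12 * b) * 30 := by ring
    rw [this]
    exact cnil_add (cnil_mul_left _ hb) (cnil_mul_left _ h30)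
  have hv : IsNilpotent ((8 * b ^ 2 + 22 * b) ^ 2 - (8 * b ^ 2 + 22 * b)) := by
    have : (8 * b ^ 2 + 22 * b) ^ 2 - (8 * b ^ 2 + 22 * b)
        = (64 * b + 352) * (b ^ 3 - b) + (18 * b ^ 2 + 11 * b) * 30 := by ring
    rw [this]
    exact cnil_add (cnil_mul_left _ hb) (cnil_mul_left _ h30)
  have hw : IsNilpotent (b - (23 * b ^ 2 + 8 * b) + (8 * b ^ 2 + 22 * b)) := by
    apply IsNilpotent.of_pow (m := 2)
    have : (b - (23 * b ^ 2 + 8 * b) + (8 * b ^ 2 + 22 * b)) ^ 2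
        = (225 * b - 450) * (b ^ 3 - b) + (15 * b ^ 2 - 15 * b) * 30 := by ring
    rw [this]
    exact cnil_add (cnil_mul_left _ hb) (cnil_mul_left _ h30)
  obtain ⟨e, he, hue⟩ := lift_idem hu
  obtain ⟨f, hf, hvf⟩ := lift_idem hv
  refine ⟨e, f, b - e + f, he, hf, ?_, by ring⟩
  have : b - e + f = (b - (23 * b ^ 2 + 8 * b) + (8 * b ^ 2 + 22 * b))
      + ((23 * b ^ 2 + 8 * b) - e) + (-((8 * b ^ 2 + 22 * b) - f)) := by ring
  rw [this]
  exact cnil_add (cnil_add hw hue) hvf.neg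

/-- forward computation, sum case -/
private lemma fwdA {e f n : S} (he : e * e = e) (hf : f * f = f) (hn : IsNilpotent n) :
    IsNilpotent ((e + f + n) * ((e + f + n) - 1) * ((e + f + n) - 2)) := by
  have key : (e + f + n) * ((e + f + n) - 1) * ((e + f + n) - 2)
      = n * (3 * (e + f) ^ 2 + 3 * (e + f) * n + n ^ 2 - 6 * (e + f) - 3 * n + 2) := by
    linear_combination (e + 3 * f - 2) * he + (3 * e + f - 2) * hf
  rw [key]
  exact cnil_mul_right _ hn

/-- forward computation, difference case -/
private lemma fwdB {e f n : S} (he : e * e = e) (hf : f * f = f) (hn : IsNilpotent n) :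
    IsNilpotent ((e - f + n) ^ 3 - (e - f + n)) := by
  have key : (e - f + n) ^ 3 - (e - f + n)
      = n * (3 * (e - f) ^ 2 + 3 * (e - f) * n + n ^ 2 - 1) := by
    linear_combination (e - 3 * f + 1) * he + (3 * e - f - 1) * hf
  rw [key]
  exact cnil_mul_right _ hn

end Helpers

section Transfer

variable {R : Type*} [Ring R]

private lemma coe_ofNat' {T : Subring R} (n : ℕ) [n.AtLeastTwo] :
    ((OfNat.ofNat n : T) : R) = OfNat.ofNat n := rfl

private lemma nil_up {T : Subring R} {x : T} (h : IsNilpotent x) : IsNilpotent (x : R) := by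
  obtain ⟨k, hk⟩ := h
  exact ⟨k, by exact_mod_cast congrArg (Subtype.val) hk⟩

private lemma nil_down {T : Subring R} {x : T} (h : IsNilpotent (x : R)) : IsNilpotent x := by
  obtain ⟨k, hk⟩ := h
  exact ⟨k, by ext; push_cast; exact hk⟩

end Transfer

theorem wsnc_iff_nilpotency_conditions {R : Type*} [Ring R] :
    IsWeaklyStrongly2NilClean R ↔
      IsNilpotent (30 : R) ∧
      ∀ a : R, IsNilpotent (a ^ 3 - a) ∨ IsNilpotent (a * (a - 1) * (a - 2)) ∨
        IsNilpotent (a * (a + 1) * (a + 2)) := by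
  constructor
  · intro h
    -- first, the per-element disjunction
    have main : ∀ a : R, IsNilpotent (a ^ 3 - a) ∨ IsNilpotent (a * (a - 1) * (a - 2)) ∨
        IsNilpotent (a * (a + 1) * (a + 2)) := by
      intro a
      obtain ⟨e, f, n, he, hf, hn, cef, cen, cfn, hcases⟩ := h a
      set s : Set R := {e, f, n} with hs
      have hcomm : ∀ x ∈ s, ∀ y ∈ s, x * y = y * x := by
        rintro x (rfl | rfl | rfl) y (rfl | rfl | rfl)
        · rfl
        · exact cef
        · exact cen
        · exact cef.symm
        · rfl
        · exact cfn
        · exact cen.symm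
        · exact cfn.symm
        · rfl
      letI : CommRing (Subring.closure s) := Subring.closureCommRingOfComm hcomm
      have heM : e ∈ Subring.closure s := Subring.subset_closure (by simp [hs])
      have hfM : f ∈ Subring.closure s := Subring.subset_closure (by simp [hs])
      have hnM : n ∈ Subring.closure s := Subring.subset_closure (by simp [hs])
      set E : Subring.closure s := ⟨e, heM⟩
      set F : Subring.closure s := ⟨f, hfM⟩
      set N : Subring.closure s := ⟨n, hnM⟩
      have hE : E * E = E := by ext; exact he
      have hF : F * F = F := by ext; exact hf
      have hN : IsNilpotent N := nil_down (x := N) hn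
      rcases hcases with h1 | h2 | h3 | h4
      · refine Or.inr (Or.inl ?_)
        have := nil_up (fwdA hE hF hN)
        have hcoe : ((E + F + N) * ((E + F + N) - 1) * ((E + F + N) - 2) : Subring.closure s)
            = (a * (a - 1) * (a - 2) : R) := by
          have c2 : ((2 : Subring.closure s) : R) = 2 := rfl
          push_cast [c2]
          rw [← h1]
        rwa [hcoe] at this
      · refine Or.inl ?_
        have := nil_up (fwdB hE hF hN)
        have hcoe : (((E - F + N) ^ 3 - (E - F + N) : Subring.closure s) : R)
            = (a ^ 3 - a : R) := by
          have c2 : ((2 : Subring.closure s) : R) = 2 := rfl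
          push_cast [c2]
          rw [← h2]
        rwa [hcoe] at this
      · refine Or.inl ?_
        have := nil_up (fwdB hF hE hN)
        have hcoe : (((F - E + N) ^ 3 - (F - E + N) : Subring.closure s) : R)
            = (a ^ 3 - a : R) := by
          have c2 : ((2 : Subring.closure s) : R) = 2 := rfl
          push_cast [c2]
          rw [show (f - e + n : R) = a by rw [h3]; abel]
        rwa [hcoe] at this
      · refine Or.inr (Or.inr ?_)
        have := nil_up (fwdA hE hF hN.neg)
        have hcoe : ((E + F + (-N)) * ((E + F + (-N)) - 1) * ((E + F + (-N)) - 2) :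
            Subring.closure s) = (-(a * (a + 1) * (a + 2)) : R) := by
          have c2 : ((2 : Subring.closure s) : R) = 2 := rfl
          push_cast [c2]
          rw [show (e + f + -n : R) = -a by rw [h4]; abel]
          noncomm_ring
        rw [hcoe] at this
        exact isNilpotent_neg_iff.mp this
    refine ⟨?_, main⟩
    -- 30 is nilpotent, from the decomposition of 3
    rcases main 3 with h24 | h6 | h60
    · have h24' : IsNilpotent (24 : R) := by
        have : ((3 : R) ^ 3 - 3) = 24 := by norm_num
        rwa [this] at h24
      apply IsNilpotent.of_pow (m := 3)
      have : (30 : R) ^ 3 = ((1125 : ℕ) : R) * 24 := by push_cast; norm_num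
      rw [this]
      exact (Nat.cast_commute 1125 (24 : R)).isNilpotent_mul_left h24'
    · have h6' : IsNilpotent (6 : R) := by
        have : ((3 : R) * (3 - 1) * (3 - 2)) = 6 := by norm_num
        rwa [this] at h6
      have : (30 : R) = ((5 : ℕ) : R) * 6 := by push_cast; norm_num
      rw [this]
      exact (Nat.cast_commute 5 (6 : R)).isNilpotent_mul_left h6'
    · have h60' : IsNilpotent (60 : R) := by
        have : ((3 : R) * (3 + 1) * (3 + 2)) = 60 := by norm_num
        rwa [this] at h60
      apply IsNilpotent.of_pow (m := 2)
      have : (30 : R) ^ 2 = ((15 : ℕ) : R) * 60 := by push_cast; norm_num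
      rw [this]
      exact (Nat.cast_commute 15 (60 : R)).isNilpotent_mul_left h60'
  · rintro ⟨h30, hall⟩ a
    set s : Set R := {a} with hs
    have hcomm : ∀ x ∈ s, ∀ y ∈ s, x * y = y * x := by
      intro x hx y hy
      rw [hs, Set.mem_singleton_iff] at hx hy
      rw [hx, hy]
    letI : CommRing (Subring.closure s) := Subring.closureCommRingOfComm hcomm
    have haM : a ∈ Subring.closure s := Subring.subset_closure (by simp [hs])
    set b : Subring.closure s := ⟨a, haM⟩
    have h30T : IsNilpotent ((30 : Subring.closure s)) := by
      apply nil_down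
      have c30 : ((30 : Subring.closure s) : R) = 30 := rfl
      rw [c30]
      exact h30
    rcases hall a with h1 | h2 | h3
    · -- a^3 - a nilpotent : a = e - f + n
      have hbT : IsNilpotent (b ^ 3 - b) := by
        apply nil_down
        have : ((b ^ 3 - b : Subring.closure s) : R) = a ^ 3 - a := by
          push_cast
          ring_nf
          rfl
        rwa [this]
      obtain ⟨e, f, n, he, hf, hn, hsum⟩ := caseB h30T hbT
      refine ⟨e, f, n, ?_, ?_, nil_up hn, ?_, ?_, ?_, Or.inr (Or.inl ?_)⟩
      · show (e : R) * e = e; exact_mod_cast congrArg Subtype.val he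
      · show (f : R) * f = f; exact_mod_cast congrArg Subtype.val hf
      · show (e : R) * f = f * e; exact_mod_cast congrArg Subtype.val (mul_comm e f)
      · show (e : R) * n = n * e; exact_mod_cast congrArg Subtype.val (mul_comm e n)
      · show (f : R) * n = n * f; exact_mod_cast congrArg Subtype.val (mul_comm f n)
      · have := congrArg Subtype.val hsum
        push_cast at this
        exact this
    · -- a(a-1)(a-2) nilpotent : a = e + f + n
      have hbT : IsNilpotent (b * (b - 1) * (b - 2)) := by
        apply nil_down
        have : ((b * (b - 1) * (b - 2) : Subring.closure s) : R) = a * (a - 1) * (a - 2) := by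
          have c2 : ((2 : Subring.closure s) : R) = 2 := rfl
          push_cast [c2]
          noncomm_ring
        rwa [this]
      obtain ⟨e, f, n, he, hf, hn, hsum⟩ := caseA h30T hbT
      refine ⟨e, f, n, ?_, ?_, nil_up hn, ?_, ?_, ?_, Or.inl ?_⟩
      · show (e : R) * e = e; exact_mod_cast congrArg Subtype.val he
      · show (f : R) * f = f; exact_mod_cast congrArg Subtype.val hf
      · show (e : R) * f = f * e; exact_mod_cast congrArg Subtype.val (mul_comm e f)
      · show (e : R) * n = n * e; exact_mod_cast congrArg Subtype.val (mul_comm e n)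
      · show (f : R) * n = n * f; exact_mod_cast congrArg Subtype.val (mul_comm f n)
      · have := congrArg Subtype.val hsum
        push_cast at this
        exact this
    · -- a(a+1)(a+2) nilpotent : a = -e - f + n
      have hbT : IsNilpotent ((-b) * ((-b) - 1) * ((-b) - 2)) := by
        apply nil_down
        have : (((-b) * ((-b) - 1) * ((-b) - 2) : Subring.closure s) : R)
            = -(a * (a + 1) * (a + 2)) := by
          have c2 : ((2 : Subring.closure s) : R) = 2 := rfl
          push_cast [c2]
          noncomm_ring
        rw [this]
        exact h3.neg
      obtain ⟨e, f, n, he, hf, hn, hsum⟩ := caseA h30T hbT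
      refine ⟨e, f, -n, ?_, ?_, (nil_up hn).neg, ?_, ?_, ?_, Or.inr (Or.inr (Or.inr ?_))⟩
      · show (e : R) * e = e; exact_mod_cast congrArg Subtype.val he
      · show (f : R) * f = f; exact_mod_cast congrArg Subtype.val hf
      · show (e : R) * f = f * e; exact_mod_cast congrArg Subtype.val (mul_comm e f)
      · show (e : R) * (-(n : R)) = (-(n : R)) * e
        have : (e : R) * n = n * e := by exact_mod_cast congrArg Subtype.val (mul_comm e n)
        rw [mul_neg, neg_mul, this]
      · show (f : R) * (-(n : R)) = (-(n : R)) * f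
        have : (f : R) * n = n * f := by exact_mod_cast congrArg Subtype.val (mul_comm f n)
        rw [mul_neg, neg_mul, this]
      · have := congrArg Subtype.val hsum
        push_cast at this
        have ha : -a = (e : R) + f + n := this
        have ha2 := congrArg Neg.neg ha
        rw [neg_neg] at ha2
        rw [ha2]
        abel
end

section
/- Let I be a nil ideal of a ring R (every element of I is nilpotent). Then R is weakly strongly 2-nil-clean if and only if the quotient ring R/I is weakly strongly 2-nil-clean. -/
section CommLemmas

variable {A : Type*} [CommRing A]

private lemma nmul (y : A) {x : A} (h : IsNilpotent x) : IsNilpotent (x * y) :=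
  (Commute.all x y).isNilpotent_mul_right h

private lemma nmul' (y : A) {x : A} (h : IsNilpotent x) : IsNilpotent (y * x) :=
  (Commute.all y x).isNilpotent_mul_left h

private lemma nadd {x y : A} (hx : IsNilpotent x) (hy : IsNilpotent y) :
    IsNilpotent (x + y) := (Commute.all x y).isNilpotent_add hx hy

private lemma nilp_of_pow {x : A} (m : ℕ) (h : IsNilpotent (x ^ m)) : IsNilpotent x := by
  obtain ⟨k, hk⟩ := h
  exact ⟨m * k, by rw [pow_mul]; exact hk⟩

private lemma lift_aux : ∀ (k : ℕ) (x : A), (x ^ 2 - x) ^ (2 ^ k) = 0 →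
    ∃ e : A, e * e = e ∧ IsNilpotent (e - x) := by
  intro k
  induction k with
  | zero =>
    intro x hx
    simp only [pow_zero, pow_one] at hx
    exact ⟨x, by linear_combination hx, ⟨1, by simp⟩⟩
  | succ k ih =>
    intro x hx
    have h1 : (3*x^2 - 2*x^3) ^ 2 - (3*x^2 - 2*x^3) = (x^2 - x)^2 * (4*x^2 - 4*x - 3) := by
      ring
    have h2 : ((3*x^2 - 2*x^3) ^ 2 - (3*x^2 - 2*x^3)) ^ (2 ^ k) = 0 := by
      rw [h1, mul_pow, ← pow_mul]
      have h3 : 2 * 2 ^ k = 2 ^ (k+1) := by rw [pow_succ]; ring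
      rw [h3, hx, zero_mul]
    obtain ⟨e, he, hen⟩ := ih _ h2
    refine ⟨e, he, ?_⟩
    have hnx : IsNilpotent (x ^ 2 - x) := ⟨2 ^ (k+1), hx⟩
    have h4 : e - x = (e - (3*x^2 - 2*x^3)) + (x^2 - x) * (-(2*x - 1)) := by ring
    rw [h4]
    exact nadd hen (nmul _ hnx)

private lemma lift_idem_s16 {x : A} (h : IsNilpotent (x ^ 2 - x)) :
    ∃ e : A, e * e = e ∧ IsNilpotent (e - x) := by
  obtain ⟨m, hm⟩ := h
  refine lift_aux m x ?_
  have h2 : 2 ^ m = m + (2 ^ m - m) :=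
    (Nat.add_sub_cancel' (Nat.le_of_lt (by clear hm; induction m with | zero => norm_num | succ k ih => rw [pow_succ]; omega))).symm
  rw [h2, pow_add, hm, zero_mul]

private lemma corner_lift {ε x : A} (hε : ε * ε = ε) (hx : IsNilpotent (x ^ 2 - x))
    (hxε : ε * x = x) : ∃ e : A, e * e = e ∧ ε * e = e ∧ IsNilpotent (e - x) := by
  obtain ⟨e0, he0, hn⟩ := lift_idem_s16 hx
  refine ⟨ε * e0, by linear_combination (e0*e0)*hε + ε*he0, by linear_combination e0*hε, ?_⟩
  have h1 : ε * e0 - x = ε * (e0 - x) := by linear_combination hxε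
  rw [h1]
  exact nmul' ε hn

/-- corner with a half-unit: pattern `e - f`. -/
private lemma corner_pm {ε H a : A} (hε : ε * ε = ε) (hH : ε * H = H) (h2H : 2 * H = ε)
    (hq : IsNilpotent (ε * (a ^ 3 - a))) :
    ∃ e f : A, e * e = e ∧ f * f = f ∧ ε * e = e ∧ ε * f = f ∧
      IsNilpotent (ε * a - e + f) := by
  have hxe : IsNilpotent ((H * (a^2 + a)) ^ 2 - H * (a^2 + a)) := by
    have key : (H * (a^2+a)) ^ 2 - H * (a^2+a)
        = (ε * (a^3 - a)) * ((H*H) * (a+2)) := by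
      linear_combination (H*(a^2+a))*h2H + ((a^2+a) - H*(a^2+a)*(a^2+a-2))*hH
    rw [key]; exact nmul _ hq
  have hxf : IsNilpotent ((H * (a^2 - a)) ^ 2 - H * (a^2 - a)) := by
    have key : (H * (a^2-a)) ^ 2 - H * (a^2-a)
        = (ε * (a^3 - a)) * ((H*H) * (a-2)) := by
      linear_combination (H*(a^2-a))*h2H + ((a^2-a) - H*(a^2-a)*(a^2-a-2))*hH
    rw [key]; exact nmul _ hq
  obtain ⟨e, he, heε, hen⟩ := corner_lift hε hxe (by linear_combination (a^2+a)*hH)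
  obtain ⟨f, hf, hfε, hfn⟩ := corner_lift hε hxf (by linear_combination (a^2-a)*hH)
  refine ⟨e, f, he, hf, heε, hfε, ?_⟩
  have key2 : ε * a - e + f
      = (f - H*(a^2-a)) + (-1) * (e - H*(a^2+a)) := by
    linear_combination (-a)*h2H
  rw [key2]
  exact nadd hfn (nmul' _ hen)

/-- corner with a half-unit: pattern `e + f`. -/
private lemma corner_pp {ε H a : A} (hε : ε * ε = ε) (hH : ε * H = H) (h2H : 2 * H = ε)
    (hq : IsNilpotent (ε * (a ^ 3 - 3*a^2 + 2*a))) :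
    ∃ e f : A, e * e = e ∧ f * f = f ∧ ε * e = e ∧ ε * f = f ∧
      IsNilpotent (ε * a - e - f) := by
  have hxf : IsNilpotent ((H * (a^2 - a)) ^ 2 - H * (a^2 - a)) := by
    have key : (H * (a^2-a)) ^ 2 - H * (a^2-a)
        = (ε * (a^3 - 3*a^2 + 2*a)) * ((H*H) * (a+1)) := by
      linear_combination (H*(a^2-a))*h2H + ((a^2-a) - H*(a^2-a)*(a^2-a-2))*hH
    rw [key]; exact nmul _ hq
  have hxe : IsNilpotent ((ε*(2*a - a^2) + H*(a^2-a)) ^ 2 - (ε*(2*a - a^2) + H*(a^2-a))) := by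
    have key : (ε*(2*a - a^2) + H*(a^2-a)) ^ 2 - (ε*(2*a - a^2) + H*(a^2-a))
        = (ε * (a^3 - 3*a^2 + 2*a)) * ((H*H) * (a-3)) := by
      linear_combination ((2*a-a^2)^2)*hε
        + (2*(2*a-a^2)*(a^2-a) - H*(a^3-3*a^2+2*a)*(a-3) + (2*a^3-5*a^2+3*a))*hH
        + (-((2*a-a^2)^2 - (2*a-a^2)) + H*(2*a^3-5*a^2+3*a))*h2H
    rw [key]; exact nmul _ hq
  obtain ⟨f, hf, hfε, hfn⟩ := corner_lift hε hxf (by linear_combination (a^2-a)*hH)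
  obtain ⟨e, he, heε, hen⟩ := corner_lift hε hxe
    (by linear_combination (2*a-a^2)*hε + (a^2-a)*hH)
  refine ⟨e, f, he, hf, heε, hfε, ?_⟩
  have key2 : ε * a - e - f
      = (-1) * (e - (ε*(2*a - a^2) + H*(a^2-a))) + (-1) * (f - H*(a^2-a)) := by
    linear_combination (-(a^2-a))*h2H
  rw [key2]
  exact nadd (nmul' _ hen) (nmul' _ hfn)

/-- corner with a half-unit: pattern `-e - f`. -/
private lemma corner_mm {ε H a : A} (hε : ε * ε = ε) (hH : ε * H = H) (h2H : 2 * H = ε)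
    (hq : IsNilpotent (ε * (a ^ 3 + 3*a^2 + 2*a))) :
    ∃ e f : A, e * e = e ∧ f * f = f ∧ ε * e = e ∧ ε * f = f ∧
      IsNilpotent (ε * a + e + f) := by
  obtain ⟨e, f, he, hf, heε, hfε, hn⟩ := corner_pp (a := -a) hε hH h2H
    (by
      have h1 : ε * ((-a) ^ 3 - 3*(-a)^2 + 2*(-a)) = -(ε * (a ^ 3 + 3*a^2 + 2*a)) := by ring
      rw [h1]; exact hq.neg)
  refine ⟨e, f, he, hf, heε, hfε, ?_⟩
  have h2 : ε * a + e + f = -(ε * (-a) - e - f) := by ring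
  rw [h2]; exact hn.neg

/-- corner where 2 is nilpotent: all sign patterns, with `f = 0`. -/
private lemma corner2 {ε a : A} (hε : ε * ε = ε) (h2 : IsNilpotent (2 * ε))
    (hq : IsNilpotent (a^3 - 3*a^2 + 2*a) ∨ IsNilpotent (a^3 - a) ∨
      IsNilpotent (a^3 + 3*a^2 + 2*a)) :
    ∃ e : A, e * e = e ∧ ε * e = e ∧ IsNilpotent (ε * a - e) ∧ IsNilpotent (ε * a + e) := by
  have hsq : IsNilpotent (ε * (a^2 - a)) := by
    rcases hq with h | h | h
    · refine nilp_of_pow 2 ?_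
      have key : (ε * (a^2 - a))^2
          = (a^3 - 3*a^2 + 2*a) * (ε*(a-1)) + (2*ε) * (a*(a-1)^2) := by
        linear_combination (a^2*(a-1)^2)*hε
      rw [key]; exact nadd (nmul _ h) (nmul _ h2)
    · refine nilp_of_pow 3 ?_
      have key : (ε * (a^2 - a))^3
          = (a^3 - a) * (ε*(a^2*(a-1))) + (2*ε) * (-(a^3*(a-1)^2)) := by
        linear_combination ((ε+1)*(a^3*(a-1)^3))*hε
      rw [key]
      exact nadd (nmul _ h) (nmul _ h2)
    · refine nilp_of_pow 2 ?_
      have key : (ε * (a^2 - a))^2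
          = (a^3 + 3*a^2 + 2*a) * (ε*(a-1)) + (2*ε) * (-((2*a^2+a)*(a-1))) := by
        linear_combination (a^2*(a-1)^2)*hε
      rw [key]
      exact nadd (nmul _ h) (nmul _ h2)
  have hx : IsNilpotent ((ε * a) ^ 2 - ε * a) := by
    have key : (ε * a) ^ 2 - ε * a = ε * (a^2 - a) + (a^2) * (ε*ε - ε) := by ring
    rw [key, hε, sub_self, mul_zero, add_zero]
    exact hsq
  obtain ⟨e, he, heε, hen⟩ := corner_lift hε hx (by linear_combination a*hε)
  refine ⟨e, he, heε, ?_, ?_⟩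
  · have h1 : ε * a - e = -(e - ε * a) := by ring
    rw [h1]; exact hen.neg
  · have h1 : ε * a + e = -(e - ε * a) + (2*ε) * e := by linear_combination (-2)*heε
    rw [h1]
    exact nadd hen.neg (nmul _ h2)

private lemma orth {ε₁ ε₂ e₁ e₂ : A} (h12 : ε₁ * ε₂ = 0) (h1 : ε₁ * e₁ = e₁)
    (h2 : ε₂ * e₂ = e₂) : e₁ * e₂ = 0 := by
  linear_combination (e₁*e₂)*h12 - (ε₁*e₁)*h2 - e₂*h1

private lemma glue2 {a ε₁ ε₂ e₁ f₁ e₂ f₂ s t : A}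
    (hsum : ε₁ + ε₂ = 1) (h12 : ε₁ * ε₂ = 0)
    (he₁ : e₁*e₁ = e₁) (hf₁ : f₁*f₁ = f₁) (he₂ : e₂*e₂ = e₂) (hf₂ : f₂*f₂ = f₂)
    (he₁ε : ε₁*e₁ = e₁) (hf₁ε : ε₁*f₁ = f₁) (he₂ε : ε₂*e₂ = e₂) (hf₂ε : ε₂*f₂ = f₂)
    (h₁ : IsNilpotent (ε₁*a - s*e₁ - t*f₁)) (h₂ : IsNilpotent (ε₂*a - s*e₂ - t*f₂)) :
    ∃ e f n : A, e*e = e ∧ f*f = f ∧ IsNilpotent n ∧ a = s*e + t*f + n := by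
  have hee := orth h12 he₁ε he₂ε
  have hff := orth h12 hf₁ε hf₂ε
  refine ⟨e₁+e₂, f₁+f₂, a - s*(e₁+e₂) - t*(f₁+f₂), ?_, ?_, ?_, by ring⟩
  · linear_combination he₁ + he₂ + 2*hee
  · linear_combination hf₁ + hf₂ + 2*hff
  · have key : a - s*(e₁+e₂) - t*(f₁+f₂)
        = (ε₁*a - s*e₁ - t*f₁) + (ε₂*a - s*e₂ - t*f₂) := by
      linear_combination (-a)*hsum
    rw [key]; exact nadd h₁ h₂

private lemma glue3 {a ε₁ ε₂ ε₃ e₁ f₁ e₂ f₂ e₃ f₃ s t : A}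
    (hsum : ε₁ + ε₂ + ε₃ = 1) (h12 : ε₁ * ε₂ = 0) (h13 : ε₁ * ε₃ = 0) (h23 : ε₂ * ε₃ = 0)
    (he₁ : e₁*e₁ = e₁) (hf₁ : f₁*f₁ = f₁) (he₂ : e₂*e₂ = e₂) (hf₂ : f₂*f₂ = f₂)
    (he₃ : e₃*e₃ = e₃) (hf₃ : f₃*f₃ = f₃)
    (he₁ε : ε₁*e₁ = e₁) (hf₁ε : ε₁*f₁ = f₁) (he₂ε : ε₂*e₂ = e₂) (hf₂ε : ε₂*f₂ = f₂)
    (he₃ε : ε₃*e₃ = e₃) (hf₃ε : ε₃*f₃ = f₃)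
    (h₁ : IsNilpotent (ε₁*a - s*e₁ - t*f₁)) (h₂ : IsNilpotent (ε₂*a - s*e₂ - t*f₂))
    (h₃ : IsNilpotent (ε₃*a - s*e₃ - t*f₃)) :
    ∃ e f n : A, e*e = e ∧ f*f = f ∧ IsNilpotent n ∧ a = s*e + t*f + n := by
  have hee12 := orth h12 he₁ε he₂ε
  have hee13 := orth h13 he₁ε he₃ε
  have hee23 := orth h23 he₂ε he₃ε
  have hff12 := orth h12 hf₁ε hf₂ε
  have hff13 := orth h13 hf₁ε hf₃ε
  have hff23 := orth h23 hf₂ε hf₃ε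
  refine ⟨e₁+e₂+e₃, f₁+f₂+f₃, a - s*(e₁+e₂+e₃) - t*(f₁+f₂+f₃), ?_, ?_, ?_, by ring⟩
  · linear_combination he₁ + he₂ + he₃ + 2*hee12 + 2*hee13 + 2*hee23
  · linear_combination hf₁ + hf₂ + hf₃ + 2*hff12 + 2*hff13 + 2*hff23
  · have key : a - s*(e₁+e₂+e₃) - t*(f₁+f₂+f₃)
        = (ε₁*a - s*e₁ - t*f₁) + (ε₂*a - s*e₂ - t*f₂) + (ε₃*a - s*e₃ - t*f₃) := by
      linear_combination (-a)*hsum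
    rw [key]; exact nadd (nadd h₁ h₂) h₃

private lemma half_mk {ε : A} (m : A) (hε : ε * ε = ε) (hm : IsNilpotent (m * ε))
    (c : ℕ) (hc : (2 : A) * c = 1 + m) :
    ∃ H : A, ε * H = H ∧ 2 * H = ε := by
  obtain ⟨w, hw⟩ := IsUnit.exists_right_inv hm.isUnit_one_add
  -- hw : (1 + m*ε) * w = 1
  refine ⟨(c : A) * ε * w, by linear_combination ((c:A)*w)*hε, ?_⟩
  -- 2*(c*ε*w) = (1+m)*ε*w = ε*(1+m*ε)*w + (m*ε - m*ε*ε)*w = ε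
  linear_combination (ε*w)*hc + ε*hw + (-(m*w))*hε

end CommLemmas

section CommMain

variable {A : Type*} [CommRing A]

private lemma comm_main (a : A)
    (h6 : IsNilpotent (6 : A) ∨ IsNilpotent (30 : A))
    (hq : IsNilpotent (a^3 - 3*a^2 + 2*a) ∨ IsNilpotent (a^3 - a) ∨
      IsNilpotent (a^3 + 3*a^2 + 2*a)) :
    ∃ e f n : A, e*e = e ∧ f*f = f ∧ IsNilpotent n ∧
      (a = e + f + n ∨ a = e - f + n ∨ a = -e + f + n ∨ a = -e - f + n) := by
  rcases h6 with ⟨k, hk⟩ | ⟨k, hk⟩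
  · -- 6 is nilpotent : two corners
    set K := k + 1 with hK
    have h6K : (6 : A) ^ K = 0 := by rw [hK, pow_succ, hk, zero_mul]
    have hcop : IsCoprime ((2:ℤ) ^ K) ((3:ℤ) ^ K) := by
      refine IsCoprime.pow ?_
      rw [Int.isCoprime_iff_gcd_eq_one]; decide
    obtain ⟨u, v, huv⟩ := hcop
    set ε₂ : A := (v : A) * 3 ^ K with hε₂def
    set ε₃ : A := (u : A) * 2 ^ K with hε₃def
    have hc : (u : A) * 2 ^ K + (v : A) * 3 ^ K = 1 := by
      have := congrArg (fun z : ℤ => (z : A)) huv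
      push_cast at this
      linear_combination this
    have hsum : ε₂ + ε₃ = 1 := by rw [hε₂def, hε₃def]; linear_combination hc
    have h23 : (2:A)^K * 3^K = 6^K := by rw [← mul_pow]; norm_num
    have hprod : ε₂ * ε₃ = 0 := by
      have h1 : ε₂ * ε₃ = (v:A) * (u:A) * ((2:A)^K * 3^K) := by rw [hε₂def, hε₃def]; ring
      rw [h1, h23, h6K, mul_zero]
    have hi2 : ε₂ * ε₂ = ε₂ := by linear_combination ε₂*hsum - hprod
    have hi3 : ε₃ * ε₃ = ε₃ := by linear_combination ε₃*hsum - hprod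
    have hpow2 : ε₂ ^ K = ε₂ := (show IsIdempotentElem ε₂ from hi2).pow_succ_eq k
    have hpow3 : ε₃ ^ K = ε₃ := (show IsIdempotentElem ε₃ from hi3).pow_succ_eq k
    have h2n : IsNilpotent (2 * ε₂) := by
      refine ⟨K, ?_⟩
      rw [mul_pow, hpow2]
      have h1 : (2:A)^K * ε₂ = (v:A) * ((2:A)^K * 3^K) := by rw [hε₂def]; ring
      rw [h1, h23, h6K, mul_zero]
    have h3n : IsNilpotent (3 * ε₃) := by
      refine ⟨K, ?_⟩
      rw [mul_pow, hpow3]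
      have h1 : (3:A)^K * ε₃ = (u:A) * ((2:A)^K * 3^K) := by rw [hε₃def]; ring
      rw [h1, h23, h6K, mul_zero]
    obtain ⟨H, hH, h2H⟩ := half_mk (ε := ε₃) 3 hi3 h3n 2 (by norm_num)
    obtain ⟨e₂, hie₂, he₂ε, hminus, hplus⟩ := corner2 hi2 h2n hq
    rcases hq with h | h | h
    · -- pattern (+,+)
      obtain ⟨e₃, f₃, hie₃, hif₃, he₃ε, hf₃ε, hn₃⟩ := corner_pp hi3 hH h2H
        (by rw [mul_comm]; exact nmul _ h)
      obtain ⟨e, f, n, he, hf, hn, heq⟩ := glue2 (s := 1) (t := 1) hsum hprod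
        hie₂ (mul_zero 0) hie₃ hif₃ he₂ε (mul_zero ε₂) he₃ε hf₃ε
        (by rw [show ε₂*a - 1*e₂ - 1*(0:A) = ε₂*a - e₂ from by ring]; exact hminus)
        (by rw [show ε₃*a - 1*e₃ - 1*f₃ = ε₃*a - e₃ - f₃ from by ring]; exact hn₃)
      exact ⟨e, f, n, he, hf, hn, Or.inl (by linear_combination heq)⟩
    · -- pattern (+,-)
      obtain ⟨e₃, f₃, hie₃, hif₃, he₃ε, hf₃ε, hn₃⟩ := corner_pm hi3 hH h2H
        (by rw [mul_comm]; exact nmul _ h)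
      obtain ⟨e, f, n, he, hf, hn, heq⟩ := glue2 (s := 1) (t := -1) hsum hprod
        hie₂ (mul_zero 0) hie₃ hif₃ he₂ε (mul_zero ε₂) he₃ε hf₃ε
        (by rw [show ε₂*a - 1*e₂ - (-1)*(0:A) = ε₂*a - e₂ from by ring]; exact hminus)
        (by rw [show ε₃*a - 1*e₃ - (-1)*f₃ = ε₃*a - e₃ + f₃ from by ring]; exact hn₃)
      exact ⟨e, f, n, he, hf, hn, Or.inr (Or.inl (by linear_combination heq))⟩
    · -- pattern (-,-)
      obtain ⟨e₃, f₃, hie₃, hif₃, he₃ε, hf₃ε, hn₃⟩ := corner_mm hi3 hH h2H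
        (by rw [mul_comm]; exact nmul _ h)
      obtain ⟨e, f, n, he, hf, hn, heq⟩ := glue2 (s := -1) (t := -1) hsum hprod
        hie₂ (mul_zero 0) hie₃ hif₃ he₂ε (mul_zero ε₂) he₃ε hf₃ε
        (by rw [show ε₂*a - (-1)*e₂ - (-1)*(0:A) = ε₂*a + e₂ from by ring]; exact hplus)
        (by rw [show ε₃*a - (-1)*e₃ - (-1)*f₃ = ε₃*a + e₃ + f₃ from by ring]; exact hn₃)
      exact ⟨e, f, n, he, hf, hn, Or.inr (Or.inr (Or.inr (by linear_combination heq)))⟩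
  · -- 30 is nilpotent : three corners
    set K := k + 1 with hK
    have h30K : (30 : A) ^ K = 0 := by rw [hK, pow_succ, hk, zero_mul]
    have hcop2 : IsCoprime ((15:ℤ) ^ K) ((2:ℤ) ^ K) := by
      refine IsCoprime.pow ?_
      rw [Int.isCoprime_iff_gcd_eq_one]; decide
    have hcop3 : IsCoprime ((10:ℤ) ^ K) ((3:ℤ) ^ K) := by
      refine IsCoprime.pow ?_
      rw [Int.isCoprime_iff_gcd_eq_one]; decide
    have hcop5 : IsCoprime ((6:ℤ) ^ K) ((5:ℤ) ^ K) := by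
      refine IsCoprime.pow ?_
      rw [Int.isCoprime_iff_gcd_eq_one]; decide
    obtain ⟨x2, y2, hxy2⟩ := hcop2
    obtain ⟨x3, y3, hxy3⟩ := hcop3
    obtain ⟨x5, y5, hxy5⟩ := hcop5
    set ε₂ : A := (x2 : A) * 15 ^ K with hε₂def
    set ε₃ : A := (x3 : A) * 10 ^ K with hε₃def
    set ε₅ : A := (x5 : A) * 6 ^ K with hε₅def
    have hc2 : (x2 : A) * 15 ^ K + (y2 : A) * 2 ^ K = 1 := by
      have := congrArg (fun z : ℤ => (z : A)) hxy2; push_cast at this; linear_combination this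
    have hc3 : (x3 : A) * 10 ^ K + (y3 : A) * 3 ^ K = 1 := by
      have := congrArg (fun z : ℤ => (z : A)) hxy3; push_cast at this; linear_combination this
    have hc5 : (x5 : A) * 6 ^ K + (y5 : A) * 5 ^ K = 1 := by
      have := congrArg (fun z : ℤ => (z : A)) hxy5; push_cast at this; linear_combination this
    have h15_2 : (15:A)^K * 2^K = 30^K := by rw [← mul_pow]; norm_num
    have h10_3 : (10:A)^K * 3^K = 30^K := by rw [← mul_pow]; norm_num
    have h6_5 : (6:A)^K * 5^K = 30^K := by rw [← mul_pow]; norm_num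
    have h15_10 : (15:A)^K * 10^K = 30^K * 5^K := by
      rw [← mul_pow, ← mul_pow]; norm_num
    have h15_6 : (15:A)^K * 6^K = 30^K * 3^K := by
      rw [← mul_pow, ← mul_pow]; norm_num
    have h10_6 : (10:A)^K * 6^K = 30^K * 2^K := by
      rw [← mul_pow, ← mul_pow]; norm_num
    have h23 : ε₂ * ε₃ = 0 := by
      have h1 : ε₂ * ε₃ = (x2:A)*(x3:A) * ((15:A)^K * 10^K) := by rw [hε₂def, hε₃def]; ring
      rw [h1, h15_10, h30K, zero_mul, mul_zero]
    have h25 : ε₂ * ε₅ = 0 := by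
      have h1 : ε₂ * ε₅ = (x2:A)*(x5:A) * ((15:A)^K * 6^K) := by rw [hε₂def, hε₅def]; ring
      rw [h1, h15_6, h30K, zero_mul, mul_zero]
    have h35 : ε₃ * ε₅ = 0 := by
      have h1 : ε₃ * ε₅ = (x3:A)*(x5:A) * ((10:A)^K * 6^K) := by rw [hε₃def, hε₅def]; ring
      rw [h1, h10_6, h30K, zero_mul, mul_zero]
    have h235 : (2:A)^K * 3^K * 5^K = 30^K := by
      rw [← mul_pow, ← mul_pow]; norm_num
    have hP : ((y2:A)*(2:A)^K) * ((y3:A)*(3:A)^K) * ((y5:A)*(5:A)^K) = 0 := by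
      have h1 : ((y2:A)*(2:A)^K) * ((y3:A)*(3:A)^K) * ((y5:A)*(5:A)^K)
          = (y2:A)*(y3:A)*(y5:A) * ((2:A)^K * 3^K * 5^K) := by ring
      rw [h1, h235, h30K, mul_zero]
    have e1 : (1:A) - ε₂ = (y2:A)*(2:A)^K := by rw [hε₂def]; linear_combination -hc2
    have e2 : (1:A) - ε₃ = (y3:A)*(3:A)^K := by rw [hε₃def]; linear_combination -hc3
    have e3 : (1:A) - ε₅ = (y5:A)*(5:A)^K := by rw [hε₅def]; linear_combination -hc5
    have hP' : (1 - ε₂) * (1 - ε₃) * (1 - ε₅) = 0 := by rw [e1, e2, e3]; exact hP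
    have hsum : ε₂ + ε₃ + ε₅ = 1 := by
      linear_combination -hP' + (1-ε₅)*h23 + h25 + h35
    have hi2 : ε₂ * ε₂ = ε₂ := by
      linear_combination ε₂*hc2 - ((x2:A)*(y2:A))*h15_2 - ((x2:A)*(y2:A))*h30K
    have hi3 : ε₃ * ε₃ = ε₃ := by
      linear_combination ε₃*hc3 - ((x3:A)*(y3:A))*h10_3 - ((x3:A)*(y3:A))*h30K
    have hi5 : ε₅ * ε₅ = ε₅ := by
      linear_combination ε₅*hc5 - ((x5:A)*(y5:A))*h6_5 - ((x5:A)*(y5:A))*h30K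
    have hpow2 : ε₂ ^ K = ε₂ := (show IsIdempotentElem ε₂ from hi2).pow_succ_eq k
    have hpow3 : ε₃ ^ K = ε₃ := (show IsIdempotentElem ε₃ from hi3).pow_succ_eq k
    have hpow5 : ε₅ ^ K = ε₅ := (show IsIdempotentElem ε₅ from hi5).pow_succ_eq k
    have h2n : IsNilpotent (2 * ε₂) := by
      refine ⟨K, ?_⟩
      rw [mul_pow, hpow2]
      have h1 : (2:A)^K * ε₂ = (x2:A) * ((15:A)^K * 2^K) := by rw [hε₂def]; ring
      rw [h1, h15_2, h30K, mul_zero]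
    have h3n : IsNilpotent ((3:A) * ε₃) := by
      refine ⟨K, ?_⟩
      rw [mul_pow, hpow3]
      have h1 : (3:A)^K * ε₃ = (x3:A) * ((10:A)^K * 3^K) := by rw [hε₃def]; ring
      rw [h1, h10_3, h30K, mul_zero]
    have h5n : IsNilpotent ((5:A) * ε₅) := by
      refine ⟨K, ?_⟩
      rw [mul_pow, hpow5]
      have h1 : (5:A)^K * ε₅ = (x5:A) * ((6:A)^K * 5^K) := by rw [hε₅def]; ring
      rw [h1, h6_5, h30K, mul_zero]
    obtain ⟨H3, hH3, h2H3⟩ := half_mk (ε := ε₃) 3 hi3 h3n 2 (by norm_num)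
    obtain ⟨H5, hH5, h2H5⟩ := half_mk (ε := ε₅) 5 hi5 h5n 3 (by norm_num)
    obtain ⟨e₂, hie₂, he₂ε, hminus, hplus⟩ := corner2 hi2 h2n hq
    rcases hq with h | h | h
    · -- pattern (+,+)
      obtain ⟨e₃, f₃, hie₃, hif₃, he₃ε, hf₃ε, hn₃⟩ := corner_pp hi3 hH3 h2H3
        (by rw [mul_comm]; exact nmul _ h)
      obtain ⟨e₅, f₅, hie₅, hif₅, he₅ε, hf₅ε, hn₅⟩ := corner_pp hi5 hH5 h2H5
        (by rw [mul_comm]; exact nmul _ h)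
      obtain ⟨e, f, n, he, hf, hn, heq⟩ := glue3 (s := 1) (t := 1) hsum h23 h25 h35
        hie₂ (mul_zero 0) hie₃ hif₃ hie₅ hif₅
        he₂ε (mul_zero ε₂) he₃ε hf₃ε he₅ε hf₅ε
        (by rw [show ε₂*a - 1*e₂ - 1*(0:A) = ε₂*a - e₂ from by ring]; exact hminus)
        (by rw [show ε₃*a - 1*e₃ - 1*f₃ = ε₃*a - e₃ - f₃ from by ring]; exact hn₃)
        (by rw [show ε₅*a - 1*e₅ - 1*f₅ = ε₅*a - e₅ - f₅ from by ring]; exact hn₅)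
      exact ⟨e, f, n, he, hf, hn, Or.inl (by linear_combination heq)⟩
    · -- pattern (+,-)
      obtain ⟨e₃, f₃, hie₃, hif₃, he₃ε, hf₃ε, hn₃⟩ := corner_pm hi3 hH3 h2H3
        (by rw [mul_comm]; exact nmul _ h)
      obtain ⟨e₅, f₅, hie₅, hif₅, he₅ε, hf₅ε, hn₅⟩ := corner_pm hi5 hH5 h2H5
        (by rw [mul_comm]; exact nmul _ h)
      obtain ⟨e, f, n, he, hf, hn, heq⟩ := glue3 (s := 1) (t := -1) hsum h23 h25 h35
        hie₂ (mul_zero 0) hie₃ hif₃ hie₅ hif₅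
        he₂ε (mul_zero ε₂) he₃ε hf₃ε he₅ε hf₅ε
        (by rw [show ε₂*a - 1*e₂ - (-1)*(0:A) = ε₂*a - e₂ from by ring]; exact hminus)
        (by rw [show ε₃*a - 1*e₃ - (-1)*f₃ = ε₃*a - e₃ + f₃ from by ring]; exact hn₃)
        (by rw [show ε₅*a - 1*e₅ - (-1)*f₅ = ε₅*a - e₅ + f₅ from by ring]; exact hn₅)
      exact ⟨e, f, n, he, hf, hn, Or.inr (Or.inl (by linear_combination heq))⟩
    · -- pattern (-,-)
      obtain ⟨e₃, f₃, hie₃, hif₃, he₃ε, hf₃ε, hn₃⟩ := corner_mm hi3 hH3 h2H3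
        (by rw [mul_comm]; exact nmul _ h)
      obtain ⟨e₅, f₅, hie₅, hif₅, he₅ε, hf₅ε, hn₅⟩ := corner_mm hi5 hH5 h2H5
        (by rw [mul_comm]; exact nmul _ h)
      obtain ⟨e, f, n, he, hf, hn, heq⟩ := glue3 (s := -1) (t := -1) hsum h23 h25 h35
        hie₂ (mul_zero 0) hie₃ hif₃ hie₅ hif₅
        he₂ε (mul_zero ε₂) he₃ε hf₃ε he₅ε hf₅ε
        (by rw [show ε₂*a - (-1)*e₂ - (-1)*(0:A) = ε₂*a + e₂ from by ring]; exact hplus)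
        (by rw [show ε₃*a - (-1)*e₃ - (-1)*f₃ = ε₃*a + e₃ + f₃ from by ring]; exact hn₃)
        (by rw [show ε₅*a - (-1)*e₅ - (-1)*f₅ = ε₅*a + e₅ + f₅ from by ring]; exact hn₅)
      exact ⟨e, f, n, he, hf, hn, Or.inr (Or.inr (Or.inr (by linear_combination heq)))⟩

end CommMain

section Characterization

variable {R : Type*} [Ring R]

private lemma nilp_coe_of {S : Subring R} {x : S} (h : IsNilpotent ((x : R))) :
    IsNilpotent x := by
  obtain ⟨m, hm⟩ := h
  exact ⟨m, by ext; push_cast; exact hm⟩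

/-- Forward: a weakly strongly 2-nil-clean ring satisfies the polynomial conditions. -/
private lemma ws_disj (h : IsWeaklyStrongly2NilClean R) (a : R) :
    IsNilpotent (a^3 - 3*a^2 + 2*a) ∨ IsNilpotent (a^3 - a) ∨
      IsNilpotent (a^3 + 3*a^2 + 2*a) := by
  obtain ⟨e, f, n, he, hf, hn, hef, hen, hfn, hcase⟩ := h a
  set S := Subring.closure ({e, f, n} : Set R) with hS
  letI : CommRing S := Subring.closureCommRingOfComm (by
    intro x hx y hy
    simp only [Set.mem_insert_iff, Set.mem_singleton_iff] at hx hy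
    rcases hx with rfl | rfl | rfl <;> rcases hy with rfl | rfl | rfl <;>
      first
        | rfl
        | exact hef
        | exact hef.symm
        | exact hen
        | exact hen.symm
        | exact hfn
        | exact hfn.symm)
  have hem : e ∈ S := Subring.subset_closure (by simp)
  have hfm : f ∈ S := Subring.subset_closure (by simp)
  have hnm : n ∈ S := Subring.subset_closure (by simp)
  set eS : S := ⟨e, hem⟩
  set fS : S := ⟨f, hfm⟩
  set nS : S := ⟨n, hnm⟩
  have heS : eS * eS = eS := Subtype.ext he
  have hfS : fS * fS = fS := Subtype.ext hf
  have hnS : IsNilpotent nS := nilp_coe_of hn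
  have push : ∀ x : S, IsNilpotent x → IsNilpotent ((x : R)) := fun x hx =>
    hx.map S.subtype
  rcases hcase with hc | hc | hc | hc
  · left
    have haS : (⟨a, by rw [hc]; exact S.add_mem (S.add_mem hem hfm) hnm⟩ : S)
        = eS + fS + nS := Subtype.ext hc
    set aS : S := ⟨a, by rw [hc]; exact S.add_mem (S.add_mem hem hfm) hnm⟩
    have hs3 : (eS + fS)^3 = 3*(eS + fS)^2 - 2*(eS + fS) := by
      linear_combination (eS + 3*fS - 2)*heS + (fS + 3*eS - 2)*hfS
    have key : aS^3 - 3*aS^2 + 2*aS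
        = nS * (3*(eS+fS)^2 + 3*(eS+fS)*nS + nS^2 - 6*(eS+fS) - 3*nS + 2) := by
      rw [haS]; linear_combination hs3
    have : IsNilpotent (aS^3 - 3*aS^2 + 2*aS) := by
      rw [key]; exact nmul _ hnS
    have h2 := push _ this
    have h3 : ((aS^3 - 3*aS^2 + 2*aS : S) : R) = a^3 - 3*a^2 + 2*a := by push_cast; norm_cast
    rwa [h3] at h2
  · right; left
    have haS : (⟨a, by rw [hc]; exact S.add_mem (S.sub_mem hem hfm) hnm⟩ : S)
        = eS - fS + nS := Subtype.ext hc
    set aS : S := ⟨a, by rw [hc]; exact S.add_mem (S.sub_mem hem hfm) hnm⟩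
    have ht3 : (eS - fS)^3 = eS - fS := by
      linear_combination (eS + 1 - 3*fS)*heS + (3*eS - fS - 1)*hfS
    have key : aS^3 - aS
        = nS * (3*(eS-fS)^2 + 3*(eS-fS)*nS + nS^2 - 1) := by
      rw [haS]; linear_combination ht3
    have : IsNilpotent (aS^3 - aS) := by rw [key]; exact nmul _ hnS
    have h2 := push _ this
    have h3 : ((aS^3 - aS : S) : R) = a^3 - a := by push_cast; rfl
    rwa [h3] at h2
  · right; left
    have haS : (⟨a, by rw [hc]; exact S.add_mem (S.add_mem (S.neg_mem hem) hfm) hnm⟩ : S)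
        = -eS + fS + nS := Subtype.ext hc
    set aS : S := ⟨a, by rw [hc]; exact S.add_mem (S.add_mem (S.neg_mem hem) hfm) hnm⟩
    have ht3 : (fS - eS)^3 = fS - eS := by
      linear_combination (fS + 1 - 3*eS)*hfS + (3*fS - eS - 1)*heS
    have key : aS^3 - aS
        = nS * (3*(fS-eS)^2 + 3*(fS-eS)*nS + nS^2 - 1) := by
      rw [haS]; linear_combination ht3
    have : IsNilpotent (aS^3 - aS) := by rw [key]; exact nmul _ hnS
    have h2 := push _ this
    have h3 : ((aS^3 - aS : S) : R) = a^3 - a := by push_cast; rfl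
    rwa [h3] at h2
  · right; right
    have haS : (⟨a, by rw [hc]; exact S.add_mem (S.sub_mem (S.neg_mem hem) hfm) hnm⟩ : S)
        = -eS - fS + nS := Subtype.ext hc
    set aS : S := ⟨a, by rw [hc]; exact S.add_mem (S.sub_mem (S.neg_mem hem) hfm) hnm⟩
    have hs3 : (eS + fS)^3 = 3*(eS + fS)^2 - 2*(eS + fS) := by
      linear_combination (eS + 3*fS - 2)*heS + (fS + 3*eS - 2)*hfS
    have key : aS^3 + 3*aS^2 + 2*aS
        = nS * (3*(eS+fS)^2 - 3*(eS+fS)*nS + nS^2 - 6*(eS+fS) + 3*nS + 2) := by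
      rw [haS]; linear_combination -hs3
    have : IsNilpotent (aS^3 + 3*aS^2 + 2*aS) := by rw [key]; exact nmul _ hnS
    have h2 := push _ this
    have h3 : ((aS^3 + 3*aS^2 + 2*aS : S) : R) = a^3 + 3*a^2 + 2*a := by push_cast; norm_cast
    rwa [h3] at h2
  
private lemma ws_sixthirty (h : IsWeaklyStrongly2NilClean R) :
    IsNilpotent (6 : R) ∨ IsNilpotent (30 : R) := by
  rcases ws_disj h 3 with h1 | h1 | h1
  · left
    have : (3:R)^3 - 3*(3:R)^2 + 2*3 = 6 := by norm_num
    rwa [this] at h1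
  · left
    have h24 : (3:R)^3 - 3 = 24 := by norm_num
    rw [h24] at h1
    obtain ⟨m, hm⟩ := h1
    refine ⟨3 * m, ?_⟩
    have h216 : (6:R)^3 = 24 * 9 := by norm_num
    rw [pow_mul, h216, (Commute.ofNat_left 24 (9:R)).mul_pow, hm, zero_mul]
  · right
    have h60 : (3:R)^3 + 3*(3:R)^2 + 2*3 = 60 := by norm_num
    rw [h60] at h1
    obtain ⟨m, hm⟩ := h1
    refine ⟨2 * m, ?_⟩
    have h900 : (30:R)^2 = 60 * 15 := by norm_num
    rw [pow_mul, h900, (Commute.ofNat_left 60 (15:R)).mul_pow, hm, zero_mul]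

/-- Backward: the polynomial conditions imply weakly strongly 2-nil-clean. -/
private lemma ws_of_h (h6 : IsNilpotent (6 : R) ∨ IsNilpotent (30 : R))
    (hq : ∀ a : R, IsNilpotent (a^3 - 3*a^2 + 2*a) ∨ IsNilpotent (a^3 - a) ∨
      IsNilpotent (a^3 + 3*a^2 + 2*a)) : IsWeaklyStrongly2NilClean R := by
  intro a
  set S := Subring.closure ({a} : Set R) with hS
  letI : CommRing S := Subring.closureCommRingOfComm (by
    intro x hx y hy
    simp only [Set.mem_singleton_iff] at hx hy
    subst hx; subst hy; rfl)
  have ham : a ∈ S := Subring.subset_closure (by simp)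
  set aS : S := ⟨a, ham⟩
  have h6S : IsNilpotent (6 : S) ∨ IsNilpotent (30 : S) := by
    rcases h6 with h | h
    · exact Or.inl (nilp_coe_of (by exact_mod_cast h))
    · exact Or.inr (nilp_coe_of (by exact_mod_cast h))
  have hqS : IsNilpotent (aS^3 - 3*aS^2 + 2*aS) ∨ IsNilpotent (aS^3 - aS) ∨
      IsNilpotent (aS^3 + 3*aS^2 + 2*aS) := by
    rcases hq a with h | h | h
    · exact Or.inl (nilp_coe_of (by exact_mod_cast h))
    · exact Or.inr (Or.inl (nilp_coe_of (by exact_mod_cast h)))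
    · exact Or.inr (Or.inr (nilp_coe_of (by exact_mod_cast h)))
  obtain ⟨e, f, n, he, hf, hn, hcase⟩ := comm_main aS h6S hqS
  refine ⟨(e : R), (f : R), (n : R), ?_, ?_, hn.map S.subtype, ?_, ?_, ?_, ?_⟩
  · exact congrArg Subtype.val he
  · exact congrArg Subtype.val hf
  · exact congrArg Subtype.val (mul_comm e f)
  · exact congrArg Subtype.val (mul_comm e n)
  · exact congrArg Subtype.val (mul_comm f n)
  · rcases hcase with hc | hc | hc | hc
    · exact Or.inl (congrArg Subtype.val hc)
    · exact Or.inr (Or.inl (congrArg Subtype.val hc))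
    · exact Or.inr (Or.inr (Or.inl (congrArg Subtype.val hc)))
    · exact Or.inr (Or.inr (Or.inr (congrArg Subtype.val hc)))

end Characterization

theorem wsnc_iff_quotient_nil_ideal {R : Type*} [Ring R] (I : TwoSidedIdeal R)
    (hI : ∀ x ∈ I, IsNilpotent x) :
    IsWeaklyStrongly2NilClean R ↔ IsWeaklyStrongly2NilClean I.ringCon.Quotient := by
  set π : R →+* I.ringCon.Quotient := RingCon.mk' I.ringCon with hπ
  have hsurj : Function.Surjective π := fun b => Quot.inductionOn b (fun x => ⟨x, rfl⟩)
  have hlift : ∀ x : R, IsNilpotent (π x) → IsNilpotent x := by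
    intro x hx
    obtain ⟨m, hm⟩ := hx
    have hmem : x ^ m ∈ I := by
      have h1 : π (x ^ m) = 0 := by rw [map_pow]; exact hm
      rw [TwoSidedIdeal.mem_iff]
      exact (RingCon.eq _).mp (by rw [← map_zero π] at h1; exact h1)
    obtain ⟨l, hl⟩ := hI _ hmem
    exact ⟨m * l, by rw [pow_mul]; exact hl⟩
  constructor
  · intro h
    apply ws_of_h
    · rcases ws_sixthirty h with h1 | h1
      · exact Or.inl (by have := h1.map π; rwa [map_ofNat] at this)
      · exact Or.inr (by have := h1.map π; rwa [map_ofNat] at this)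
    · intro b
      obtain ⟨x, rfl⟩ := hsurj b
      rcases ws_disj h x with h1 | h1 | h1
      · exact Or.inl (by have := h1.map π; simpa [map_sub, map_add, map_pow, map_mul,
          map_ofNat] using this)
      · exact Or.inr (Or.inl (by have := h1.map π; simpa [map_sub, map_pow] using this))
      · exact Or.inr (Or.inr (by have := h1.map π; simpa [map_add, map_pow, map_mul,
          map_ofNat] using this))
  · intro h
    apply ws_of_h
    · rcases ws_sixthirty h with h1 | h1
      · exact Or.inl (hlift 6 (by rwa [map_ofNat]))
      · exact Or.inr (hlift 30 (by rwa [map_ofNat]))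
    · intro x
      rcases ws_disj h (π x) with h1 | h1 | h1
      · refine Or.inl (hlift _ ?_)
        simpa [map_sub, map_add, map_pow, map_mul, map_ofNat] using h1
      · refine Or.inr (Or.inl (hlift _ ?_))
        simpa [map_sub, map_pow] using h1
      · refine Or.inr (Or.inr (hlift _ ?_))
        simpa [map_add, map_pow, map_mul, map_ofNat] using h1
end
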